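/- (A priori bound for the inexact method via a Fortin operator) Let U and V be real normed spaces, let B : U → V' be continuous linear with constants M, γ > 0 such that ‖Bw‖_{V'} ≤ M‖w‖_U and γ‖w‖_U ≤ ‖Bw‖_{V'} for all w ∈ U. Let ℓ ∈ V' and u ∈ U with Bu = ℓ, let U_n ⊆ U and V_m ⊆ V be subspaces, and suppose Π : V → V is a continuous linear operator with range contained in V_m satisfying the Fortin condition (Bw_n)(v - Πv) = 0 for all w_n ∈ U_n and v ∈ V, together with ‖Πv‖ ≤ C_Π‖v‖ and ‖v - Πv‖ ≤ C_I‖v‖ for all v ∈ V. For f ∈ V' define the discrete dual seminorm p(f) := sup{|f(v_m)| : v_m ∈ V_m, ‖v_m‖_V ≤ 1}. If u_n ∈ U_n satisfies p(ℓ - Bu_n) ≤ p(ℓ - Bw_n) for all w_n ∈ U_n, then ‖u - u_n‖_U ≤ ((C_Π + C_I)·M/γ)·‖u - w_n‖_U for every w_n ∈ U_n. -/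
import Mathlib


/-- A priori bound for the inexact method via a Fortin operator: if `Proj : V → V_m` is a
continuous linear operator satisfying the Fortin condition with bounds `C_Π` and `C_I`,
and `u_n ∈ U_n` minimizes the discrete dual residual
`p(f) = sup {|f(v_m)| : v_m ∈ V_m, ‖v_m‖ ≤ 1}` over `U_n`, then
`‖u - u_n‖ ≤ ((C_Π + C_I) M / γ) ‖u - w_n‖` for all `w_n ∈ U_n`. -/
theorem statement14 {U V : Type*} [NormedAddCommGroup U] [NormedSpace ℝ U]
    [NormedAddCommGroup V] [NormedSpace ℝ V]
    (B : U →L[ℝ] V →L[ℝ] ℝ) (M γ : ℝ) (hM : 0 < M) (hγ : 0 < γ)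
    (hbound : ∀ w : U, ‖B w‖ ≤ M * ‖w‖) (hbelow : ∀ w : U, γ * ‖w‖ ≤ ‖B w‖)
    (ℓ : V →L[ℝ] ℝ) (u : U) (hu : B u = ℓ)
    (Un : Submodule ℝ U) (Vm : Submodule ℝ V)
    (Proj : V →L[ℝ] V) (hrange : ∀ v : V, Proj v ∈ Vm)
    (hFortin : ∀ wn ∈ Un, ∀ v : V, B wn (v - Proj v) = 0)
    (CP CI : ℝ)
    (hCP : ∀ v : V, ‖Proj v‖ ≤ CP * ‖v‖) (hCI : ∀ v : V, ‖v - Proj v‖ ≤ CI * ‖v‖)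
    (p : (V →L[ℝ] ℝ) → ℝ)
    (hp : ∀ f : V →L[ℝ] ℝ,
      p f = sSup {x : ℝ | ∃ vm : V, vm ∈ Vm ∧ ‖vm‖ ≤ 1 ∧ x = |f vm|})
    (un : U) (hun : un ∈ Un)
    (hmin : ∀ wn ∈ Un, p (ℓ - B un) ≤ p (ℓ - B wn)) :
    ∀ wn ∈ Un, ‖u - un‖ ≤ ((CP + CI) * M / γ) * ‖u - wn‖ := by
  intro wn hwn
  set c : ℝ := (CP + CI) * M * ‖u - wn‖ with hc
  by_cases hcn : 0 ≤ c
  · -- main case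
    set S : (V →L[ℝ] ℝ) → Set ℝ :=
      fun f => {x : ℝ | ∃ vm : V, vm ∈ Vm ∧ ‖vm‖ ≤ 1 ∧ x = |f vm|} with hS
    have hSne : ∀ f, (0:ℝ) ∈ S f := by
      intro f; exact ⟨0, Vm.zero_mem, by simp, by simp⟩
    have hSbdd : ∀ f, BddAbove (S f) := by
      intro f
      refine ⟨‖f‖, ?_⟩
      rintro x ⟨vm, -, hnorm, rfl⟩
      calc |f vm| = ‖f vm‖ := (Real.norm_eq_abs _).symm
        _ ≤ ‖f‖ * ‖vm‖ := f.le_opNorm vm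
        _ ≤ ‖f‖ * 1 := by gcongr
        _ = ‖f‖ := mul_one _
    have hpnn : ∀ f, 0 ≤ p f := by
      intro f; rw [hp f]; exact le_csSup (hSbdd f) (hSne f)
    have hpmem : ∀ f, ∀ vm ∈ Vm, ‖vm‖ ≤ 1 → |f vm| ≤ p f := by
      intro f vm hvm h1; rw [hp f]
      exact le_csSup (hSbdd f) ⟨vm, hvm, h1, rfl⟩
    have hproj : ∀ (f : V →L[ℝ] ℝ) (v : V), |f (Proj v)| ≤ p f * ‖Proj v‖ := by
      intro f v
      rcases eq_or_ne (Proj v) 0 with h0 | h0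
      · simp [h0]
      · have hn : 0 < ‖Proj v‖ := norm_pos_iff.mpr h0
        have := hpmem f (‖Proj v‖⁻¹ • Proj v)
          (Vm.smul_mem _ (hrange v))
          (by rw [norm_smul, norm_inv, norm_norm]; exact le_of_eq (inv_mul_cancel₀ hn.ne'))
        rw [map_smul, smul_eq_mul, abs_mul, abs_inv, abs_norm] at this
        calc |f (Proj v)| = (‖Proj v‖⁻¹ * |f (Proj v)|) * ‖Proj v‖ := by
              field_simp
          _ ≤ p f * ‖Proj v‖ := by
              apply mul_le_mul_of_nonneg_right this hn.le
    have hMw : 0 ≤ M * ‖u - wn‖ := mul_nonneg hM.le (norm_nonneg _)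
    have hpbound : p (ℓ - B wn) ≤ M * ‖u - wn‖ := by
      rw [hp]
      apply csSup_le ⟨0, hSne _⟩
      rintro x ⟨vm, -, h1, rfl⟩
      have : (ℓ - B wn) vm = (B (u - wn)) vm := by
        rw [← hu, map_sub]
      rw [this]
      calc |(B (u - wn)) vm| = ‖(B (u - wn)) vm‖ := (Real.norm_eq_abs _).symm
        _ ≤ ‖B (u - wn)‖ * ‖vm‖ := (B (u - wn)).le_opNorm vm
        _ ≤ (M * ‖u - wn‖) * 1 := by
            apply mul_le_mul (hbound _) h1 (norm_nonneg _) hMw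
        _ = M * ‖u - wn‖ := mul_one _
    have hkey : ∀ v : V, |(ℓ - B un) v| ≤ c * ‖v‖ := by
      intro v
      have h1 := hFortin un hun v
      have h2 := hFortin wn hwn v
      have hdecomp : (ℓ - B un) v = (ℓ - B un) (Proj v) + (B (u - wn)) (v - Proj v) := by
        rw [← hu]
        simp only [ContinuousLinearMap.sub_apply, map_sub] at h1 h2 ⊢
        linarith
      have hA : |(ℓ - B un) (Proj v)| ≤ (M * ‖u - wn‖) * (CP * ‖v‖) := by
        calc |(ℓ - B un) (Proj v)| ≤ p (ℓ - B un) * ‖Proj v‖ := hproj _ v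
          _ ≤ (M * ‖u - wn‖) * (CP * ‖v‖) := by
              apply mul_le_mul ((hmin wn hwn).trans hpbound) (hCP v) (norm_nonneg _) hMw
      have hB : |(B (u - wn)) (v - Proj v)| ≤ (M * ‖u - wn‖) * (CI * ‖v‖) := by
        calc |(B (u - wn)) (v - Proj v)| = ‖(B (u - wn)) (v - Proj v)‖ :=
              (Real.norm_eq_abs _).symm
          _ ≤ ‖B (u - wn)‖ * ‖v - Proj v‖ := (B (u - wn)).le_opNorm _
          _ ≤ (M * ‖u - wn‖) * (CI * ‖v‖) := by
              apply mul_le_mul (hbound _) (hCI v) (norm_nonneg _) hMw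
      calc |(ℓ - B un) v| ≤ |(ℓ - B un) (Proj v)| + |(B (u - wn)) (v - Proj v)| := by
            rw [hdecomp]; exact abs_add_le _ _
        _ ≤ (M * ‖u - wn‖) * (CP * ‖v‖) + (M * ‖u - wn‖) * (CI * ‖v‖) := add_le_add hA hB
        _ = c * ‖v‖ := by rw [hc]; ring
    have hopn : ‖ℓ - B un‖ ≤ c :=
      ContinuousLinearMap.opNorm_le_bound _ hcn fun v => by
        rw [Real.norm_eq_abs]; exact hkey v
    have h3 : γ * ‖u - un‖ ≤ c := by
      calc γ * ‖u - un‖ ≤ ‖B (u - un)‖ := hbelow _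
        _ = ‖ℓ - B un‖ := by rw [map_sub, hu]
        _ ≤ c := hopn
    calc ‖u - un‖ ≤ c / γ := (le_div_iff₀ hγ).mpr (by rw [mul_comm]; exact h3)
      _ = (CP + CI) * M / γ * ‖u - wn‖ := by rw [hc]; ring
  · -- degenerate case: c < 0 is impossible
    exfalso
    push_neg at hcn
    have hw : 0 < ‖u - wn‖ := by
      rcases (norm_nonneg (u - wn)).lt_or_eq with h | h
      · exact h
      · exfalso; rw [hc, ← h, mul_zero] at hcn; exact lt_irrefl _ hcn
    have hCPCI : CP + CI < 0 := by
      by_contra h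
      push_neg at h
      have : 0 ≤ c := by
        rw [hc]; exact mul_nonneg (mul_nonneg h hM.le) hw.le
      linarith
    have hVtriv : ∀ v : V, ‖v‖ = 0 := by
      intro v
      have h1 : ‖v‖ ≤ ‖Proj v‖ + ‖v - Proj v‖ := by
        calc ‖v‖ = ‖Proj v + (v - Proj v)‖ := by congr 1; abel
          _ ≤ ‖Proj v‖ + ‖v - Proj v‖ := norm_add_le _ _
      have h2 : ‖v‖ ≤ (CP + CI) * ‖v‖ := by
        calc ‖v‖ ≤ ‖Proj v‖ + ‖v - Proj v‖ := h1
          _ ≤ CP * ‖v‖ + CI * ‖v‖ := add_le_add (hCP v) (hCI v)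
          _ = (CP + CI) * ‖v‖ := by ring
      nlinarith [norm_nonneg v]
    have hBz : ‖B (u - wn)‖ ≤ 0 := by
      apply ContinuousLinearMap.opNorm_le_bound _ le_rfl
      intro v
      have : v = 0 := norm_eq_zero.mp (hVtriv v)
      simp [this]
    have := hbelow (u - wn)
    nlinarith
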